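/- Let f : ℂ → ℂ be holomorphic with a fixed point p (f(p) = p). Then for every n ≥ 0 and every entire function h, the n-th derivative (h∘f)^{(n)}(p) equals f′(p)ⁿ · h^{(n)}(p) + Σ_{j<n} c_j · h^{(j)}(p), where the coefficients c_j depend only on the derivatives of f at p (not on h). -/

import Mathlib

open Finset

private lemma deriv_diff {g : ℂ → ℂ} (hg : Differentiable ℂ g) :
    Differentiable ℂ (deriv g) :=
  ((contDiff_infty_iff_deriv.mp hg.contDiff).2).differentiable (by simp)

private lemma iter_diff {h : ℂ → ℂ} (hh : Differentiable ℂ h) (k : ℕ) :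
    Differentiable ℂ (iteratedDeriv k h) := by
  induction k with
  | zero => simpa [iteratedDeriv_zero] using hh
  | succ k ih => rw [iteratedDeriv_succ]; exact deriv_diff ih

private lemma key (f : ℂ → ℂ) (hf : Differentiable ℂ f) (n : ℕ) :
    ∃ (ι : Type) (_ : Fintype ι) (a : ι → ℂ → ℂ) (m : ι → ℕ),
      (∀ i, Differentiable ℂ (a i)) ∧ (∀ i, m i < n) ∧
      ∀ h : ℂ → ℂ, Differentiable ℂ h → ∀ x : ℂ,
        iteratedDeriv n (h ∘ f) x =
          (deriv f x) ^ n * iteratedDeriv n h (f x) +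
            ∑ i, a i x * iteratedDeriv (m i) h (f x) := by
  induction n with
  | zero =>
    exact ⟨Empty, inferInstance, fun i => 0, fun i => 0, fun i => i.elim, fun i => i.elim,
      fun h hh x => by simp [iteratedDeriv_zero, Function.comp]⟩
  | succ n ih =>
    obtain ⟨ι, _, a, m, hadiff, hmlt, heq⟩ := ih
    refine ⟨Unit ⊕ ι ⊕ ι, inferInstance,
      Sum.elim (fun _ x => (n : ℂ) * (deriv f x) ^ (n - 1) * deriv (deriv f) x)
        (Sum.elim (fun i => deriv (a i)) (fun i x => a i x * deriv f x)),
      Sum.elim (fun _ => n) (Sum.elim m (fun i => m i + 1)), ?_, ?_, ?_⟩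
    · rintro (i | i | i)
      · exact ((differentiable_const _).mul ((deriv_diff hf).pow _)).mul
          (deriv_diff (deriv_diff hf))
      · exact deriv_diff (hadiff i)
      · exact (hadiff i).mul (deriv_diff hf)
    · rintro (i | i | i)
      · exact Nat.lt_succ_self n
      · exact (hmlt i).trans (Nat.lt_succ_self n)
      · exact Nat.succ_lt_succ (hmlt i)
    · intro h hh x
      have hrw : iteratedDeriv n (h ∘ f) = fun y =>
          (deriv f y) ^ n * iteratedDeriv n h (f y) +
            ∑ i, a i y * iteratedDeriv (m i) h (f y) := funext (heq h hh)
      rw [iteratedDeriv_succ, hrw]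
      have hdf : ∀ y : ℂ, HasDerivAt f (deriv f y) y :=
        fun y => (hf y).hasDerivAt
      have hcomp : ∀ k : ℕ, HasDerivAt (fun y => iteratedDeriv k h (f y))
          (iteratedDeriv (k + 1) h (f x) * deriv f x) x := by
        intro k
        have h1 : HasDerivAt (iteratedDeriv k h) (iteratedDeriv (k + 1) h (f x)) (f x) := by
          have := (iter_diff hh k (f x)).hasDerivAt
          rwa [show deriv (iteratedDeriv k h) (f x) = iteratedDeriv (k + 1) h (f x) by
            rw [iteratedDeriv_succ]] at this
        exact h1.comp x (hdf x)
      have hterm1 : HasDerivAt (fun y => (deriv f y) ^ n * iteratedDeriv n h (f y))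
          (((n : ℂ) * (deriv f x) ^ (n - 1) * deriv (deriv f) x) * iteratedDeriv n h (f x)
            + (deriv f x) ^ n * (iteratedDeriv (n + 1) h (f x) * deriv f x)) x := by
        have hp : HasDerivAt (fun y => (deriv f y) ^ n)
            ((n : ℂ) * (deriv f x) ^ (n - 1) * deriv (deriv f) x) x :=
          ((deriv_diff hf x).hasDerivAt).pow n
        exact hp.mul (hcomp n)
      have hterms : ∀ i : ι, HasDerivAt (fun y => a i y * iteratedDeriv (m i) h (f y))
          (deriv (a i) x * iteratedDeriv (m i) h (f x)
            + a i x * (iteratedDeriv (m i + 1) h (f x) * deriv f x)) x := by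
        intro i
        exact ((hadiff i x).hasDerivAt).mul (hcomp (m i))
      have hsum : HasDerivAt (fun y => ∑ i, a i y * iteratedDeriv (m i) h (f y))
          (∑ i, (deriv (a i) x * iteratedDeriv (m i) h (f x)
            + a i x * (iteratedDeriv (m i + 1) h (f x) * deriv f x))) x := by
        have := HasDerivAt.fun_sum (u := Finset.univ)
          (fun i _ => hterms i)
        simpa using this
      rw [(hterm1.fun_add hsum).deriv]
      rw [Fintype.sum_sum_type, Fintype.sum_sum_type, Finset.sum_add_distrib]
      simp only [Sum.elim_inl, Sum.elim_inr, Finset.univ_unique, Finset.sum_const,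
        Finset.card_singleton, one_smul]
      have h3 : ∑ i : ι, a i x * (iteratedDeriv (m i + 1) h (f x) * deriv f x)
          = ∑ i : ι, a i x * deriv f x * iteratedDeriv (m i + 1) h (f x) :=
        Finset.sum_congr rfl fun i _ => by ring
      rw [h3]
      ring

/-- If `f` is holomorphic with fixed point `p`, then for every `n` there
are coefficients `c j` depending only on `f` (not on `h`) such that for every entire
`h`, `(h ∘ f)⁽ⁿ⁾(p) = f'(p)ⁿ h⁽ⁿ⁾(p) + Σ_{j<n} c j · h⁽ʲ⁾(p)`. -/
theorem stmt17 (f : ℂ → ℂ) (hf : Differentiable ℂ f)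
    (p : ℂ) (hp : f p = p) (n : ℕ) :
    ∃ c : Fin n → ℂ, ∀ h : ℂ → ℂ, Differentiable ℂ h →
      iteratedDeriv n (h ∘ f) p =
        (deriv f p) ^ n * iteratedDeriv n h p +
          ∑ j : Fin n, c j * iteratedDeriv (j : ℕ) h p := by
  classical
  obtain ⟨ι, _, a, m, hadiff, hmlt, heq⟩ := key f hf n
  set g : ι → Fin n := fun i => ⟨m i, hmlt i⟩ with hg
  refine ⟨fun j => ∑ i ∈ Finset.univ.filter (fun i => g i = j), a i p, ?_⟩
  intro h hh
  have := heq h hh p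
  rw [hp] at this
  rw [this]
  congr 1
  rw [← Finset.sum_fiberwise_of_maps_to (g := g) (t := Finset.univ)
    (fun i _ => Finset.mem_univ _) (fun i => a i p * iteratedDeriv (m i) h p)]
  refine Finset.sum_congr rfl fun j _ => ?_
  rw [Finset.sum_mul]
  refine Finset.sum_congr rfl fun i hi => ?_
  have : g i = j := (Finset.mem_filter.mp hi).2
  rw [← this]
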